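/- Let d : ℝ → ℝ satisfy the Leibniz rule d(xy) = x·d(y) + y·d(x) for all x, y ∈ ℝ, and assume that d(2) = 0. Then the following five statements are equivalent, and each of them implies that d is additive (hence a standard derivation): (i) d(sinh x) = cosh(x)·d(x) for all x ∈ ℝ; (ii) d(cosh x) = sinh(x)·d(x) for all x ∈ ℝ; (iii) d(tanh x) = d(x)/cosh²(x) for all x ∈ ℝ; (iv) d(coth x) = −d(x)/sinh²(x) for all x ∈ ℝ \ {0}, where coth x = cosh x / sinh x; (v) d(eˣ) = eˣ·d(x) for all x ∈ ℝ. -/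

import Mathlib

namespace DH

variable {d : ℝ → ℝ}

lemma hd1 (hleib : ∀ x y : ℝ, d (x * y) = x * d y + y * d x) : d 1 = 0 := by
  have h := hleib 1 1; simp at h; linarith

lemma hd0 (hleib : ∀ x y : ℝ, d (x * y) = x * d y + y * d x) : d 0 = 0 := by
  have h := hleib 0 0; simpa using h

lemma hdneg (hleib : ∀ x y : ℝ, d (x * y) = x * d y + y * d x) :
    ∀ u : ℝ, d (-u) = - d u := by
  have hm1 : d (-1 : ℝ) = 0 := by
    have h := hleib (-1) (-1)
    simp at h
    have h1 := hd1 hleib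
    linarith
  intro u
  have h := hleib (-1) u
  simp [hm1] at h
  simpa using h

lemma hd2mul (hleib : ∀ x y : ℝ, d (x * y) = x * d y + y * d x) (h2 : d 2 = 0) :
    ∀ u : ℝ, d (2 * u) = 2 * d u := by
  intro u
  have h := hleib 2 u
  rw [h2] at h
  linarith

lemma hdhalf (hleib : ∀ x y : ℝ, d (x * y) = x * d y + y * d x) (h2 : d 2 = 0) :
    ∀ u : ℝ, d (u / 2) = d u / 2 := by
  intro u
  have h := hd2mul hleib h2 (u / 2)
  rw [show (2:ℝ) * (u / 2) = u by ring] at h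
  linarith

lemma hquot (hleib : ∀ x y : ℝ, d (x * y) = x * d y + y * d x) :
    ∀ u v : ℝ, v ≠ 0 → d (u / v) = (v * d u - u * d v) / v ^ 2 := by
  intro u v hv
  have h := hleib (u / v) v
  rw [div_mul_cancel₀ u hv] at h
  rw [eq_div_iff (pow_ne_zero 2 hv)]
  linear_combination (-v) * h - d v * (div_mul_cancel₀ u hv)

lemma hscale (hleib : ∀ x y : ℝ, d (x * y) = x * d y + y * d x) :
    ∀ w l : ℝ, d (w + 1) = d w → d (l * w + l) = d (l * w) + d l := by
  intro w l h
  have h1 := hleib l (w + 1)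
  have h2' := hleib l w
  rw [show l * (w + 1) = l * w + l by ring] at h1
  rw [h1, h2', h]
  ring

/-- From additivity on strictly-ordered positive pairs to full additivity. -/
lemma ADD (hleib : ∀ x y : ℝ, d (x * y) = x * d y + y * d x) (h2 : d 2 = 0)
    (hlt : ∀ a b : ℝ, 0 < a → a < b → d (a + b) = d a + d b) :
    ∀ x y : ℝ, d (x + y) = d x + d y := by
  have hpos : ∀ a b : ℝ, 0 < a → 0 < b → d (a + b) = d a + d b := by
    intro a b ha hb
    rcases lt_trichotomy a b with h | h | h
    · exact hlt a b ha h
    · subst h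
      rw [show a + a = 2 * a by ring, hd2mul hleib h2]
      ring
    · rw [add_comm, hlt b a hb h]; ring
  intro x y
  rcases eq_or_ne x 0 with rfl | hx
  · rw [zero_add, hd0 hleib]; ring
  rcases eq_or_ne y 0 with rfl | hy
  · rw [add_zero, hd0 hleib]; ring
  rcases hx.lt_or_gt with hx' | hx' <;> rcases hy.lt_or_gt with hy' | hy'
  · -- both negative
    have h := hpos (-x) (-y) (by linarith) (by linarith)
    have e : x + y = -(-x + -y) := by ring
    rw [e, hdneg hleib, h, hdneg hleib, hdneg hleib]; ring
  · -- x < 0 < y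
    rcases lt_trichotomy (x + y) 0 with hxy | hxy | hxy
    · have h := hpos (-(x + y)) y (by linarith) hy'
      rw [show -(x + y) + y = -x by ring, hdneg hleib, hdneg hleib] at h
      linarith
    · have hyx : y = -x := by linarith
      rw [hxy, hd0 hleib, hyx, hdneg hleib]; ring
    · have h := hpos (x + y) (-x) hxy (by linarith)
      rw [show x + y + -x = y by ring, hdneg hleib] at h
      linarith
  · -- y < 0 < x
    rcases lt_trichotomy (x + y) 0 with hxy | hxy | hxy
    · have h := hpos (-(x + y)) x (by linarith) hx'
      rw [show -(x + y) + x = -y by ring, hdneg hleib, hdneg hleib] at h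
      linarith
    · have hyx : y = -x := by linarith
      rw [hxy, hd0 hleib, hyx, hdneg hleib]; ring
    · have h := hpos (x + y) (-y) hxy (by linarith)
      rw [show x + y + -y = x by ring, hdneg hleib] at h
      linarith
  · exact hpos x y hx' hy'


open Real

lemma sinh_ne_zero_of_ne {x : ℝ} (hx : x ≠ 0) : Real.sinh x ≠ 0 := by
  intro h
  exact hx (Real.sinh_injective (by simpa using h))

lemma i_to_ii (hleib : ∀ x y : ℝ, d (x * y) = x * d y + y * d x) (h2 : d 2 = 0)
    (hi : ∀ x : ℝ, d (Real.sinh x) = Real.cosh x * d x) :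
    ∀ x : ℝ, d (Real.cosh x) = Real.sinh x * d x := by
  intro x
  rcases eq_or_ne x 0 with rfl | hx
  · rw [Real.cosh_zero, hd1 hleib, Real.sinh_zero]; ring
  · have hs := sinh_ne_zero_of_ne hx
    have e1 := hi (2 * x)
    rw [Real.sinh_two_mul, Real.cosh_two_mul,
      show (2:ℝ) * Real.sinh x * Real.cosh x = 2 * (Real.sinh x * Real.cosh x) by ring,
      hd2mul hleib h2, hleib (Real.sinh x) (Real.cosh x), hi x,
      hd2mul hleib h2] at e1
    apply mul_left_cancel₀ hs
    linear_combination e1 / 2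

lemma ii_to_shift (hleib : ∀ x y : ℝ, d (x * y) = x * d y + y * d x) (h2 : d 2 = 0)
    (hii : ∀ x : ℝ, d (Real.cosh x) = Real.sinh x * d x) :
    ∀ v : ℝ, 1 ≤ v → d (v + 1) = d v := by
  have key : ∀ x : ℝ, d (Real.cosh (2 * x) + 1) = d (Real.cosh (2 * x)) := by
    intro x
    have e : Real.cosh (2 * x) + 1 = 2 * (Real.cosh x * Real.cosh x) := by
      rw [Real.cosh_two_mul]
      have h := Real.sinh_sq x
      nlinarith [h]
    rw [e, hd2mul hleib h2, hleib, hii x, hii (2 * x), hd2mul hleib h2,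
      Real.sinh_two_mul]
    ring
  intro v hv
  obtain ⟨x, hx⟩ : ∃ x : ℝ, Real.cosh (2 * x) = v := by
    refine ⟨Real.arsinh (Real.sqrt ((v - 1) / 2)), ?_⟩
    rw [Real.cosh_two_mul, Real.cosh_sq, Real.sinh_arsinh,
      Real.sq_sqrt (by linarith : (0:ℝ) ≤ (v - 1) / 2)]
    ring
  rw [← hx]
  exact key x

lemma shift_to_hlt (hleib : ∀ x y : ℝ, d (x * y) = x * d y + y * d x)
    (hsh : ∀ v : ℝ, 1 ≤ v → d (v + 1) = d v) :
    ∀ a b : ℝ, 0 < a → a < b → d (a + b) = d a + d b := by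
  intro a b ha hab
  have ha' : a ≠ 0 := ne_of_gt ha
  have hw : (1:ℝ) ≤ b / a := (one_le_div ha).mpr hab.le
  have h := hscale hleib (b / a) a (hsh _ hw)
  rw [show a * (b / a) = b by field_simp] at h
  rw [add_comm a b, h]
  ring

lemma shift01_to_hlt (hleib : ∀ x y : ℝ, d (x * y) = x * d y + y * d x)
    (hsh : ∀ w : ℝ, 0 < w → w < 1 → d (w + 1) = d w) :
    ∀ a b : ℝ, 0 < a → a < b → d (a + b) = d a + d b := by
  intro a b ha hab
  have hb : (0:ℝ) < b := lt_trans ha hab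
  have hb' : b ≠ 0 := ne_of_gt hb
  have hw1 : (0:ℝ) < a / b := div_pos ha hb
  have hw2 : a / b < 1 := (div_lt_one hb).mpr hab
  have h := hscale hleib (a / b) b (hsh _ hw1 hw2)
  rw [show b * (a / b) = a by field_simp] at h
  rw [h]

lemma ii_add_to_i (hleib : ∀ x y : ℝ, d (x * y) = x * d y + y * d x)
    (hii : ∀ x : ℝ, d (Real.cosh x) = Real.sinh x * d x)
    (hadd : ∀ x y : ℝ, d (x + y) = d x + d y) :
    ∀ x : ℝ, d (Real.sinh x) = Real.cosh x * d x := by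
  intro x
  rcases eq_or_ne x 0 with rfl | hx
  · rw [Real.sinh_zero, hd0 hleib, Real.cosh_zero]; ring
  · have hs := sinh_ne_zero_of_ne hx
    have e := hleib (Real.sinh x) (Real.sinh x)
    have e2 : Real.sinh x * Real.sinh x = Real.cosh x * Real.cosh x + (-1) := by
      have h := Real.sinh_sq x
      nlinarith [h]
    have eA : d (Real.sinh x * Real.sinh x) = 2 * Real.cosh x * Real.sinh x * d x := by
      rw [e2, hadd, hleib, hii x, hdneg hleib, hd1 hleib]
      ring
    apply mul_left_cancel₀ hs
    linear_combination (eA - e) / 2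

lemma i_ii_add_to_v (hleib : ∀ x y : ℝ, d (x * y) = x * d y + y * d x)
    (hi : ∀ x : ℝ, d (Real.sinh x) = Real.cosh x * d x)
    (hii : ∀ x : ℝ, d (Real.cosh x) = Real.sinh x * d x)
    (hadd : ∀ x y : ℝ, d (x + y) = d x + d y) :
    ∀ x : ℝ, d (Real.exp x) = Real.exp x * d x := by
  intro x
  rw [← Real.sinh_add_cosh, hadd, hi x, hii x]
  ring

lemma v_to_add (hleib : ∀ x y : ℝ, d (x * y) = x * d y + y * d x)
    (hv : ∀ x : ℝ, d (Real.exp x) = Real.exp x * d x) :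
    ∀ x y : ℝ, d (x + y) = d x + d y := by
  intro x y
  have e := hleib (Real.exp x) (Real.exp y)
  rw [← Real.exp_add, hv (x + y), hv x, hv y] at e
  apply mul_left_cancel₀ (Real.exp_ne_zero (x + y))
  rw [e, Real.exp_add]
  ring

lemma v_add_to_i (hleib : ∀ x y : ℝ, d (x * y) = x * d y + y * d x) (h2 : d 2 = 0)
    (hv : ∀ x : ℝ, d (Real.exp x) = Real.exp x * d x)
    (hadd : ∀ x y : ℝ, d (x + y) = d x + d y) :
    ∀ x : ℝ, d (Real.sinh x) = Real.cosh x * d x := by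
  intro x
  have h1 := hv x
  have h2' := hv (-x)
  have e : d (Real.sinh x) = (d (Real.exp x) - d (Real.exp (-x))) / 2 := by
    rw [Real.sinh_eq, hdhalf hleib h2, sub_eq_add_neg, hadd, hdneg hleib]
    ring
  rw [e, h1, h2', hdneg hleib, Real.cosh_eq]
  ring

lemma i_ii_add_to_iii (hleib : ∀ x y : ℝ, d (x * y) = x * d y + y * d x)
    (hi : ∀ x : ℝ, d (Real.sinh x) = Real.cosh x * d x)
    (hii : ∀ x : ℝ, d (Real.cosh x) = Real.sinh x * d x) :
    ∀ x : ℝ, d (Real.tanh x) = d x / (Real.cosh x) ^ 2 := by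
  intro x
  have hc := (Real.cosh_pos x).ne'
  rw [Real.tanh_eq_sinh_div_cosh, hquot hleib _ _ hc, hi x, hii x]
  have h : Real.cosh x * (Real.cosh x * d x) - Real.sinh x * (Real.sinh x * d x) = d x := by
    linear_combination d x * Real.cosh_sq x
  rw [h]

lemma iii_to_shift (hleib : ∀ x y : ℝ, d (x * y) = x * d y + y * d x) (h2 : d 2 = 0)
    (hiii : ∀ x : ℝ, d (Real.tanh x) = d x / (Real.cosh x) ^ 2) :
    ∀ w : ℝ, 0 < w → w < 1 → d (w + 1) = d w := by
  have key : ∀ x : ℝ, x ≠ 0 → d (Real.tanh x ^ 2 + 1) = d (Real.tanh x ^ 2) := by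
    intro x hx
    have hc := (Real.cosh_pos x).ne'
    have hC := (Real.cosh_pos (2 * x)).ne'
    have hC' : Real.cosh x ^ 2 + Real.sinh x ^ 2 ≠ 0 := by
      rw [← Real.cosh_two_mul]; positivity
    have hid : Real.tanh (2 * x) * (Real.tanh x ^ 2 + 1) = 2 * Real.tanh x := by
      rw [Real.tanh_eq_sinh_div_cosh, Real.tanh_eq_sinh_div_cosh, Real.sinh_two_mul,
        Real.cosh_two_mul]
      field_simp
      ring
    have SI : 2 * (1 / Real.cosh x ^ 2) - (Real.tanh x ^ 2 + 1) * (2 / Real.cosh (2 * x) ^ 2)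
        = Real.tanh (2 * x) * (2 * Real.tanh x * (1 / Real.cosh x ^ 2)) := by
      rw [Real.tanh_eq_sinh_div_cosh, Real.tanh_eq_sinh_div_cosh, Real.sinh_two_mul,
        Real.cosh_two_mul]
      field_simp
      linear_combination (Real.cosh x ^ 2 + Real.sinh x ^ 2) * Real.cosh_sq x
    have e := hleib (Real.tanh (2 * x)) (Real.tanh x ^ 2 + 1)
    rw [hid, hd2mul hleib h2] at e
    have h1 := hiii x
    have h3 := hiii (2 * x)
    rw [hd2mul hleib h2] at h3
    rw [h1, h3] at e
    have ht2 : Real.tanh (2 * x) ≠ 0 := by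
      rw [Real.tanh_eq_sinh_div_cosh]
      exact div_ne_zero (sinh_ne_zero_of_ne (mul_ne_zero two_ne_zero hx)) hC
    apply mul_left_cancel₀ ht2
    have edT : d (Real.tanh x ^ 2) = 2 * Real.tanh x * (d x / Real.cosh x ^ 2) := by
      rw [sq, hleib, h1]; ring
    rw [edT]
    have key2 : 2 * (d x / Real.cosh x ^ 2) -
        (Real.tanh x ^ 2 + 1) * (2 * d x / Real.cosh (2 * x) ^ 2) =
        Real.tanh (2 * x) * (2 * Real.tanh x * (d x / Real.cosh x ^ 2)) := by
      linear_combination d x * SI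
    linear_combination key2 - e
  intro w hw0 hw1
  obtain ⟨x, hx0, hx⟩ : ∃ x : ℝ, x ≠ 0 ∧ Real.tanh x ^ 2 = w := by
    have h1w : (0:ℝ) < 1 - w := by linarith
    have hw' : (0:ℝ) ≤ w / (1 - w) := div_nonneg hw0.le h1w.le
    refine ⟨Real.arsinh (Real.sqrt (w / (1 - w))), ?_, ?_⟩
    · intro h
      rw [Real.arsinh_eq_zero_iff] at h
      have hpos := Real.sqrt_pos.mpr (div_pos hw0 h1w)
      rw [h] at hpos
      exact lt_irrefl 0 hpos
    · rw [Real.tanh_eq_sinh_div_cosh, div_pow, Real.cosh_sq, Real.sinh_arsinh,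
        Real.sq_sqrt hw']
      field_simp
      ring
  rw [← hx]
  exact key x hx0

lemma iii_add_to_ii (hleib : ∀ x y : ℝ, d (x * y) = x * d y + y * d x)
    (hiii : ∀ x : ℝ, d (Real.tanh x) = d x / (Real.cosh x) ^ 2)
    (hadd : ∀ x y : ℝ, d (x + y) = d x + d y) :
    ∀ x : ℝ, d (Real.cosh x) = Real.sinh x * d x := by
  intro x
  have hc := (Real.cosh_pos x).ne'
  have h1 := hiii x
  have hTc : Real.tanh x * Real.cosh x = Real.sinh x := by
    rw [Real.tanh_eq_sinh_div_cosh]; field_simp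
  have hid : Real.cosh x * Real.cosh x * (1 - Real.tanh x ^ 2) = 1 := by
    rw [Real.tanh_eq_sinh_div_cosh]
    field_simp
    linear_combination Real.cosh_sq x
  have e := hleib (Real.cosh x * Real.cosh x) (1 - Real.tanh x ^ 2)
  rw [hid, hd1 hleib] at e
  have h1mT : d (1 - Real.tanh x ^ 2) = -(2 * Real.tanh x * (d x / Real.cosh x ^ 2)) := by
    rw [sub_eq_add_neg, hadd, hd1 hleib, hdneg hleib, sq, hleib, h1]; ring
  rw [h1mT, hleib (Real.cosh x) (Real.cosh x)] at e
  have hinv : 1 - Real.tanh x ^ 2 = 1 / Real.cosh x ^ 2 := by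
    rw [Real.tanh_eq_sinh_div_cosh]
    field_simp
    linear_combination Real.cosh_sq x
  rw [hinv] at e
  field_simp at e
  apply mul_left_cancel₀ (show (2:ℝ) * Real.cosh x ^ 3 ≠ 0 from
    mul_ne_zero two_ne_zero (pow_ne_zero 3 hc))
  linear_combination -(Real.cosh x ^ 3) * e + 2 * Real.cosh x ^ 3 * d x * hTc

lemma iii_to_iv (hleib : ∀ x y : ℝ, d (x * y) = x * d y + y * d x)
    (hiii : ∀ x : ℝ, d (Real.tanh x) = d x / (Real.cosh x) ^ 2) :
    ∀ x : ℝ, x ≠ 0 → d (Real.cosh x / Real.sinh x) = -(d x / (Real.sinh x) ^ 2) := by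
  intro x hx
  have hc := (Real.cosh_pos x).ne'
  have hs := sinh_ne_zero_of_ne hx
  have ht : Real.tanh x ≠ 0 := by
    rw [Real.tanh_eq_sinh_div_cosh]; exact div_ne_zero hs hc
  have hid : Real.tanh x * (Real.cosh x / Real.sinh x) = 1 := by
    rw [Real.tanh_eq_sinh_div_cosh]; field_simp
  have e := hleib (Real.tanh x) (Real.cosh x / Real.sinh x)
  rw [hid, hd1 hleib, hiii x] at e
  have SI2 : Real.cosh x / Real.sinh x * (1 / Real.cosh x ^ 2)
      = Real.tanh x * (1 / Real.sinh x ^ 2) := by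
    rw [Real.tanh_eq_sinh_div_cosh]; field_simp
  apply mul_left_cancel₀ ht
  linear_combination -e - d x * SI2

lemma iv_to_iii (hleib : ∀ x y : ℝ, d (x * y) = x * d y + y * d x)
    (hiv : ∀ x : ℝ, x ≠ 0 → d (Real.cosh x / Real.sinh x) = -(d x / (Real.sinh x) ^ 2)) :
    ∀ x : ℝ, d (Real.tanh x) = d x / (Real.cosh x) ^ 2 := by
  intro x
  rcases eq_or_ne x 0 with rfl | hx
  · simp [Real.tanh_zero, hd0 hleib]
  · have hc := (Real.cosh_pos x).ne'
    have hs := sinh_ne_zero_of_ne hx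
    have hco : Real.cosh x / Real.sinh x ≠ 0 := div_ne_zero hc hs
    have hid : Real.cosh x / Real.sinh x * Real.tanh x = 1 := by
      rw [Real.tanh_eq_sinh_div_cosh]; field_simp
    have e := hleib (Real.cosh x / Real.sinh x) (Real.tanh x)
    rw [hid, hd1 hleib, hiv x hx] at e
    have SI3 : Real.tanh x * (1 / Real.sinh x ^ 2)
        = Real.cosh x / Real.sinh x * (1 / Real.cosh x ^ 2) := by
      rw [Real.tanh_eq_sinh_div_cosh]; field_simp
    apply mul_left_cancel₀ hco
    linear_combination -e + d x * SI3

end DH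

/-- For a function `d : ℝ → ℝ` satisfying the Leibniz rule with `d 2 = 0`, being a
derivation with respect to the hyperbolic sine, hyperbolic cosine, hyperbolic tangent,
hyperbolic cotangent or exponential functions are all equivalent, and each of them implies
that `d` is additive, hence a standard derivation. -/
theorem derivation_wrt_hyperbolic_equiv
    (d : ℝ → ℝ) (hleib : ∀ x y : ℝ, d (x * y) = x * d y + y * d x)
    (h2 : d 2 = 0) :
    ((∀ x : ℝ, d (Real.sinh x) = Real.cosh x * d x) ↔
      (∀ x : ℝ, d (Real.cosh x) = Real.sinh x * d x)) ∧
    ((∀ x : ℝ, d (Real.sinh x) = Real.cosh x * d x) ↔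
      (∀ x : ℝ, d (Real.tanh x) = d x / (Real.cosh x) ^ 2)) ∧
    ((∀ x : ℝ, d (Real.sinh x) = Real.cosh x * d x) ↔
      (∀ x : ℝ, x ≠ 0 → d (Real.cosh x / Real.sinh x) = -(d x / (Real.sinh x) ^ 2))) ∧
    ((∀ x : ℝ, d (Real.sinh x) = Real.cosh x * d x) ↔
      (∀ x : ℝ, d (Real.exp x) = Real.exp x * d x)) ∧
    (((∀ x : ℝ, d (Real.sinh x) = Real.cosh x * d x) ∨
      (∀ x : ℝ, d (Real.cosh x) = Real.sinh x * d x) ∨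
      (∀ x : ℝ, d (Real.tanh x) = d x / (Real.cosh x) ^ 2) ∨
      (∀ x : ℝ, x ≠ 0 → d (Real.cosh x / Real.sinh x) = -(d x / (Real.sinh x) ^ 2)) ∨
      (∀ x : ℝ, d (Real.exp x) = Real.exp x * d x)) →
      ∀ x y : ℝ, d (x + y) = d x + d y) := by
  have I2II := DH.i_to_ii hleib h2
  have II2ADD : (∀ x : ℝ, d (Real.cosh x) = Real.sinh x * d x) →
      ∀ x y : ℝ, d (x + y) = d x + d y := fun hii =>
    DH.ADD hleib h2 (DH.shift_to_hlt hleib (DH.ii_to_shift hleib h2 hii))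
  have III2ADD : (∀ x : ℝ, d (Real.tanh x) = d x / (Real.cosh x) ^ 2) →
      ∀ x y : ℝ, d (x + y) = d x + d y := fun hiii =>
    DH.ADD hleib h2 (DH.shift01_to_hlt hleib (DH.iii_to_shift hleib h2 hiii))
  have II2I : (∀ x : ℝ, d (Real.cosh x) = Real.sinh x * d x) →
      ∀ x : ℝ, d (Real.sinh x) = Real.cosh x * d x := fun hii =>
    DH.ii_add_to_i hleib hii (II2ADD hii)
  have III2II := fun h => DH.iii_add_to_ii hleib h (III2ADD h)
  have II2III : (∀ x : ℝ, d (Real.cosh x) = Real.sinh x * d x) →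
      ∀ x : ℝ, d (Real.tanh x) = d x / (Real.cosh x) ^ 2 := fun hii =>
    DH.i_ii_add_to_iii hleib (II2I hii) hii
  have V2ADD := DH.v_to_add hleib
  have V2I : (∀ x : ℝ, d (Real.exp x) = Real.exp x * d x) →
      ∀ x : ℝ, d (Real.sinh x) = Real.cosh x * d x := fun hv =>
    DH.v_add_to_i hleib h2 hv (V2ADD hv)
  have I2V : (∀ x : ℝ, d (Real.sinh x) = Real.cosh x * d x) →
      ∀ x : ℝ, d (Real.exp x) = Real.exp x * d x := fun hi =>
    DH.i_ii_add_to_v hleib hi (I2II hi) (II2ADD (I2II hi))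
  have III2IV := DH.iii_to_iv hleib
  have IV2III := DH.iv_to_iii hleib
  refine ⟨⟨I2II, II2I⟩, ⟨fun hi => II2III (I2II hi), fun h3 => II2I (III2II h3)⟩,
    ⟨fun hi => III2IV (II2III (I2II hi)), fun h4 => II2I (III2II (IV2III h4))⟩,
    ⟨I2V, V2I⟩, ?_⟩
  rintro (h | h | h | h | h)
  · exact II2ADD (I2II h)
  · exact II2ADD h
  · exact III2ADD h
  · exact III2ADD (IV2III h)
  · exact V2ADD h
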